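/- Under Assumption (A), for every continuous $f : \mathbb{T} \to \mathbb{R}$, $\lim_{N \to \infty} \frac{N}{a_N^2} \log \mathbb{E}\exp\Big(\frac{a_N}{N} \sum_{x \in \mathbb{T}^N} (\eta^N_0(x) - \phi(x/N)) f(x/N)\Big) = \frac{1}{2}\int_{\mathbb{T}} f^2(u)\,\phi(u)(1-\phi(u))\,du$. -/

import Mathlib

open MeasureTheory ProbabilityTheory Filter

/-- Expectation of a function of a `{0,1}`-valued random variable. -/
lemma twoPoint_aux {Ω : Type*} [MeasurableSpace Ω] (P : Measure Ω) [IsProbabilityMeasure P]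
    (X : Ω → ℝ) (hm : Measurable X) (hv : ∀ ω, X ω = 0 ∨ X ω = 1)
    {p : ℝ} (hp : 0 ≤ p) (hmarg : P {ω | X ω = 1} = ENNReal.ofReal p) (g : ℝ → ℝ) :
    Integrable (fun ω => g (X ω)) P ∧ ∫ ω, g (X ω) ∂P = (1 - p) * g 0 + p * g 1 := by
  have hs : MeasurableSet {ω | X ω = 1} := hm (measurableSet_singleton 1)
  have heq : (fun ω => g (X ω))
      = fun ω => g 0 + Set.indicator {ω | X ω = 1} (fun _ => g 1 - g 0) ω := by
    funext ω
    rcases hv ω with h | h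
    · rw [h, Set.indicator_of_notMem (by simp [Set.mem_setOf_eq, h])]
      ring
    · rw [h, Set.indicator_of_mem (by simpa [Set.mem_setOf_eq] using h)]
      ring
  have hint2 : Integrable (fun ω => Set.indicator {ω | X ω = 1} (fun _ => g 1 - g 0) ω) P :=
    (integrable_const _).indicator hs
  constructor
  · rw [heq]
    exact (integrable_const _).add hint2
  · rw [heq, integral_add (integrable_const _) hint2, integral_const,
      integral_indicator_const _ hs, measureReal_def, measureReal_def, hmarg, measure_univ, ENNReal.toReal_ofReal hp]
    simp only [ENNReal.toReal_one, one_smul, smul_eq_mul]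
    ring

set_option maxHeartbeats 1600000 in
/-- Uniform third-order bound for the log of the two-point Laplace transform. -/
lemma logLam_bound {M p c t : ℝ} (hM : 1 ≤ M) (hp0 : 0 ≤ p) (hp1 : p ≤ 1)
    (hc : |c| ≤ M) (ht : |t| ≤ 1 / (2 * M ^ 2)) :
    |Real.log ((1 - p) * Real.exp (t * ((0 - p) * c)) + p * Real.exp (t * ((1 - p) * c)))
      - t ^ 2 * c ^ 2 * (p * (1 - p)) / 2| ≤ 2 * M ^ 3 * |t| ^ 3 := by
  have hM0 : (0:ℝ) < M := lt_of_lt_of_le one_pos hM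
  set x₀ := t * ((0 - p) * c) with hx0
  set x₁ := t * ((1 - p) * c) with hx1
  set u := |t| * M with hu
  have hu0 : 0 ≤ u := mul_nonneg (abs_nonneg t) hM0.le
  have huhalf : u ≤ 1 / 2 := by
    have h1 : |t| * M ≤ (1 / (2 * M ^ 2)) * M :=
      mul_le_mul_of_nonneg_right ht hM0.le
    have h2 : (1 / (2 * M ^ 2)) * M = 1 / (2 * M) := by
      field_simp
    have h3 : 1 / (2 * M) ≤ 1 / 2 := by
      apply div_le_div_of_nonneg_left one_pos.le two_pos
      linarith
    rw [hu]
    calc |t| * M ≤ 1 / (2 * M) := by rw [← h2]; exact h1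
      _ ≤ 1 / 2 := h3
  have habs0 : |(0:ℝ) - p| ≤ 1 := by
    rw [abs_sub_comm, sub_zero, abs_of_nonneg hp0]; exact hp1
  have habs1 : |(1:ℝ) - p| ≤ 1 := by
    rw [abs_of_nonneg (by linarith)]; linarith
  have h0 : |x₀| ≤ u := by
    rw [hx0, abs_mul, abs_mul, hu]
    have : |0 - p| * |c| ≤ 1 * M :=
      mul_le_mul habs0 hc (abs_nonneg c) zero_le_one
    nlinarith [abs_nonneg t]
  have h1 : |x₁| ≤ u := by
    rw [hx1, abs_mul, abs_mul, hu]
    have : |1 - p| * |c| ≤ 1 * M :=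
      mul_le_mul habs1 hc (abs_nonneg c) zero_le_one
    nlinarith [abs_nonneg t]
  have h0le1 : |x₀| ≤ 1 := by linarith
  have h1le1 : |x₁| ≤ 1 := by linarith
  have key : ∀ x : ℝ, |x| ≤ 1 → |Real.exp x - (1 + x + x ^ 2 / 2)| ≤ |x| ^ 3 := by
    intro x hx
    have h := Real.exp_bound hx (n := 3) (by norm_num)
    have hsum : ∑ m ∈ Finset.range 3, x ^ m / m.factorial = 1 + x + x ^ 2 / 2 := by
      norm_num [Finset.sum_range_succ, Nat.factorial]
      try ring
    rw [hsum] at h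
    norm_num [Nat.factorial] at h
    nlinarith [pow_nonneg (abs_nonneg x) 3]
  set L := (1 - p) * Real.exp x₀ + p * Real.exp x₁ with hL
  set q := t ^ 2 * c ^ 2 * (p * (1 - p)) / 2 with hq
  have e0 := key x₀ h0le1
  have e1 := key x₁ h1le1
  have hiden : L - 1 - q = (1 - p) * (Real.exp x₀ - (1 + x₀ + x₀ ^ 2 / 2))
      + p * (Real.exp x₁ - (1 + x₁ + x₁ ^ 2 / 2)) := by
    rw [hL, hq, hx0, hx1]; ring
  have hA : |L - 1 - q| ≤ u ^ 3 := by
    rw [hiden]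
    have t0 : |x₀| ^ 3 ≤ u ^ 3 := pow_le_pow_left₀ (abs_nonneg _) h0 3
    have t1 : |x₁| ^ 3 ≤ u ^ 3 := pow_le_pow_left₀ (abs_nonneg _) h1 3
    calc |(1 - p) * (Real.exp x₀ - (1 + x₀ + x₀ ^ 2 / 2))
        + p * (Real.exp x₁ - (1 + x₁ + x₁ ^ 2 / 2))|
        ≤ |(1 - p) * (Real.exp x₀ - (1 + x₀ + x₀ ^ 2 / 2))|
          + |p * (Real.exp x₁ - (1 + x₁ + x₁ ^ 2 / 2))| := abs_add_le _ _
      _ = (1 - p) * |Real.exp x₀ - (1 + x₀ + x₀ ^ 2 / 2)|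
          + p * |Real.exp x₁ - (1 + x₁ + x₁ ^ 2 / 2)| := by
            rw [abs_mul, abs_mul, abs_of_nonneg (by linarith), abs_of_nonneg hp0]
      _ ≤ u ^ 3 := by
            have hA0 : |Real.exp x₀ - (1 + x₀ + x₀ ^ 2 / 2)| ≤ u ^ 3 := le_trans e0 t0
            have hA1 : |Real.exp x₁ - (1 + x₁ + x₁ ^ 2 / 2)| ≤ u ^ 3 := le_trans e1 t1
            have m0 : (1 - p) * |Real.exp x₀ - (1 + x₀ + x₀ ^ 2 / 2)|
                ≤ (1 - p) * u ^ 3 := mul_le_mul_of_nonneg_left hA0 (by linarith)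
            have m1 : p * |Real.exp x₁ - (1 + x₁ + x₁ ^ 2 / 2)|
                ≤ p * u ^ 3 := mul_le_mul_of_nonneg_left hA1 hp0
            linarith
  have hc2 : c ^ 2 ≤ M ^ 2 := by nlinarith [abs_nonneg c, sq_abs c]
  have hq0 : 0 ≤ q := by
    rw [hq]
    have : 0 ≤ p * (1 - p) := mul_nonneg hp0 (by linarith)
    positivity
  have hu2 : u ^ 2 = t ^ 2 * M ^ 2 := by rw [hu, mul_pow, sq_abs]
  have hqb : q ≤ u ^ 2 / 8 := by
    have h14 : p * (1 - p) ≤ 1 / 4 := by nlinarith [sq_nonneg (p - 1/2)]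
    have hpp : 0 ≤ p * (1 - p) := mul_nonneg hp0 (by linarith)
    have hstep : c ^ 2 * (p * (1 - p)) ≤ M ^ 2 * (1 / 4) :=
      mul_le_mul hc2 h14 hpp (by positivity)
    have hstep2 : t ^ 2 * (c ^ 2 * (p * (1 - p))) ≤ t ^ 2 * (M ^ 2 * (1 / 4)) :=
      mul_le_mul_of_nonneg_left hstep (sq_nonneg t)
    rw [hq, hu2]
    nlinarith [hstep2]
  have hLb : |L - 1| ≤ u ^ 2 := by
    have htri : |L - 1| ≤ |L - 1 - q| + |q| := by
      have := abs_add_le (L - 1 - q) q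
      simpa using this
    rw [abs_of_nonneg hq0] at htri
    have hcube : u ^ 3 ≤ u ^ 2 / 2 := by
      have := mul_le_mul_of_nonneg_right huhalf (sq_nonneg u)
      nlinarith
    linarith
  have hL34 : 3 / 4 ≤ L := by
    have h1 := (abs_le.mp hLb).1
    have hu214 : u ^ 2 ≤ 1 / 4 := by nlinarith [hu0, huhalf]
    linarith
  have hLpos : 0 < L := by linarith
  have hlog_up : Real.log L ≤ L - 1 := Real.log_le_sub_one_of_pos hLpos
  have hlog_lo : 1 - L⁻¹ ≤ Real.log L := Real.one_sub_inv_le_log_of_pos hLpos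
  have hLinv : L * L⁻¹ = 1 := mul_inv_cancel₀ (ne_of_gt hLpos)
  have hlog : |Real.log L - (L - 1)| ≤ 2 * (L - 1) ^ 2 := by
    rw [abs_le]
    constructor
    · have hinvle : L⁻¹ ≤ 1 - (L - 1) + 2 * (L - 1) ^ 2 := by
        rw [← mul_le_mul_iff_right₀ hLpos, hLinv]
        nlinarith [sq_nonneg (L - 1)]
      nlinarith
    · nlinarith [sq_nonneg (L - 1)]
  have hLsq : (L - 1) ^ 2 ≤ u ^ 4 := by
    have h1 := mul_le_mul hLb hLb (abs_nonneg _) (sq_nonneg u)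
    have h2 := abs_mul_abs_self (L - 1)
    nlinarith
  have hfin : |Real.log L - q| ≤ 2 * u ^ 3 := by
    have htri : |Real.log L - q| ≤ |Real.log L - (L - 1)| + |L - 1 - q| := by
      have := abs_add_le (Real.log L - (L - 1)) (L - 1 - q)
      simpa [sub_add_sub_cancel] using this
    have h4 : 2 * u ^ 4 ≤ u ^ 3 := by
      have := mul_le_mul_of_nonneg_right huhalf (pow_nonneg hu0 3)
      nlinarith
    linarith
  calc |Real.log L - q| ≤ 2 * u ^ 3 := hfin
    _ = 2 * M ^ 3 * |t| ^ 3 := by rw [hu]; ring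

/-- Convergence of left Riemann sums of a continuous function on `[0,1]`. -/
lemma riemannSum_tendsto (G : ℝ → ℝ) (hG : Continuous G) :
    Tendsto (fun N : ℕ => (∑ x : Fin N, G ((x : ℝ) / N)) / N) atTop
      (nhds (∫ u in (0:ℝ)..1, G u)) := by
  rw [Metric.tendsto_atTop]
  intro ε hε
  have hUC : UniformContinuousOn G (Set.Icc (0:ℝ) 1) :=
    isCompact_Icc.uniformContinuousOn_of_continuous hG.continuousOn
  obtain ⟨δ, hδ, hδ'⟩ := Metric.uniformContinuousOn_iff.mp hUC (ε / 2) (by positivity)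
  obtain ⟨N₀, hN₀⟩ := exists_nat_gt (1 / δ)
  refine ⟨N₀ + 1, fun N hN => ?_⟩
  have hN1 : 1 ≤ N := le_trans (Nat.le_add_left 1 N₀) hN
  have hNpos : (0:ℝ) < N := by exact_mod_cast Nat.lt_of_lt_of_le Nat.zero_lt_one hN1
  have hNne : (N:ℝ) ≠ 0 := ne_of_gt hNpos
  have hNb : 1 / δ < (N:ℝ) := by
    calc (1:ℝ) / δ < N₀ := hN₀
      _ ≤ N := by exact_mod_cast le_trans (Nat.le_succ N₀) hN
  have hinv : δ * (1 / δ) = 1 := mul_one_div_cancel (ne_of_gt hδ)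
  have hδN : 1 / (N:ℝ) < δ := by
    rw [div_lt_iff₀ hNpos]
    nlinarith
  -- rewrite the integral as a sum of integrals over adjacent intervals
  have hintegrable : ∀ (p q : ℝ), IntervalIntegrable G MeasureTheory.volume p q :=
    fun p q => hG.intervalIntegrable p q
  have hI : ∫ u in (0:ℝ)..1, G u
      = ∑ k ∈ Finset.range N, ∫ u in ((k:ℝ)/N)..(((k:ℕ)+1:ℝ)/N), G u := by
    have h := intervalIntegral.sum_integral_adjacent_intervals
      (a := fun k : ℕ => (k:ℝ)/N) (n := N) (μ := MeasureTheory.volume) (f := G)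
      (fun k _ => hintegrable _ _)
    simp only [Nat.cast_zero, zero_div] at h
    rw [div_self hNne] at h
    rw [← h]
    exact Finset.sum_congr rfl (fun k _ => by norm_num)
  have hS : (∑ x : Fin N, G ((x:ℝ)/N)) / N
      = ∑ k ∈ Finset.range N, G ((k:ℝ)/N) * (1/N) := by
    rw [Finset.sum_div, Fin.sum_univ_eq_sum_range (fun k : ℕ => G ((k:ℝ)/N) / N)]
    exact Finset.sum_congr rfl (fun k _ => by ring)
  rw [Real.dist_eq, hS, hI, ← Finset.sum_sub_distrib]
  have hterm : ∀ k ∈ Finset.range N,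
      |G ((k:ℝ)/N) * (1/N) - ∫ u in ((k:ℝ)/N)..(((k:ℕ)+1:ℝ)/N), G u| ≤ (ε/2) * (1/N) := by
    intro k hk
    have hkN : (k:ℝ) < N := by exact_mod_cast Finset.mem_range.mp hk
    have hk1N : ((k:ℕ)+1:ℝ) ≤ N := by
      have : (k:ℕ) + 1 ≤ N := Finset.mem_range.mp hk
      exact_mod_cast this
    have hab : (k:ℝ)/N ≤ ((k:ℕ)+1:ℝ)/N := by
      exact (div_le_div_iff_of_pos_right hNpos).mpr (by linarith)
    have hlen : ((k:ℕ)+1:ℝ)/N - (k:ℝ)/N = 1/N := by field_simp; ring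
    have hconst : G ((k:ℝ)/N) * (1/N)
        = ∫ _ in ((k:ℝ)/N)..(((k:ℕ)+1:ℝ)/N), G ((k:ℝ)/N) := by
      rw [intervalIntegral.integral_const, smul_eq_mul, hlen]
      ring
    rw [hconst, ← intervalIntegral.integral_sub (intervalIntegrable_const) (hintegrable _ _)]
    have hbnd : ∀ x ∈ Set.uIoc ((k:ℝ)/N) (((k:ℕ)+1:ℝ)/N),
        ‖G ((k:ℝ)/N) - G x‖ ≤ ε/2 := by
      intro x hx
      rw [Set.uIoc_of_le hab] at hx
      obtain ⟨hx1, hx2⟩ := hx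
      have hkmem : (k:ℝ)/N ∈ Set.Icc (0:ℝ) 1 := by
        constructor
        · positivity
        · rw [div_le_one hNpos]; linarith
      have hxmem : x ∈ Set.Icc (0:ℝ) 1 := by
        constructor
        · have : (0:ℝ) ≤ (k:ℝ)/N := by positivity
          linarith
        · have : ((k:ℕ)+1:ℝ)/N ≤ 1 := by rw [div_le_one hNpos]; linarith
          linarith
      have hdist : dist ((k:ℝ)/N) x < δ := by
        rw [Real.dist_eq, abs_of_nonpos (by linarith)]
        have : x - (k:ℝ)/N ≤ 1/N := by
          have := hx2
          rw [← hlen]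
          linarith
        linarith
      have := hδ' _ hkmem _ hxmem hdist
      rw [Real.dist_eq] at this
      exact le_of_lt this
    have := intervalIntegral.norm_integral_le_of_norm_le_const hbnd
    rw [Real.norm_eq_abs] at this
    calc |∫ u in ((k:ℝ)/N)..(((k:ℕ)+1:ℝ)/N), (G ((k:ℝ)/N) - G u)|
        ≤ (ε/2) * |((k:ℕ)+1:ℝ)/N - (k:ℝ)/N| := this
      _ = (ε/2) * (1/N) := by rw [hlen, abs_of_nonneg (by positivity)]
  calc |∑ k ∈ Finset.range N,
        (G ((k:ℝ)/N) * (1/N) - ∫ u in ((k:ℝ)/N)..(((k:ℕ)+1:ℝ)/N), G u)|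
      ≤ ∑ k ∈ Finset.range N,
        |G ((k:ℝ)/N) * (1/N) - ∫ u in ((k:ℝ)/N)..(((k:ℕ)+1:ℝ)/N), G u| :=
        Finset.abs_sum_le_sum_abs _ _
    _ ≤ ∑ _k ∈ Finset.range N, (ε/2) * (1/N) := Finset.sum_le_sum hterm
    _ = (N:ℝ) * ((ε/2) * (1/N)) := by
        rw [Finset.sum_const, Finset.card_range, nsmul_eq_mul]
    _ = ε/2 := by field_simp
    _ < ε := by linarith

/-- under Assumption (A) (independent Bernoulli initial data with slowly varying
profile `φ`), for every continuous (`1`-periodic) `f`, the scaled log-moment generating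
function of the initial density field converges:
`(N/a_N²) log E exp((a_N/N) ∑_x (η₀^N(x) - φ(x/N)) f(x/N)) → ½ ∫ f² φ(1-φ)`. -/
theorem initial_field_logMGF_limit
    {Ω : Type*} [MeasurableSpace Ω] (P : Measure Ω) [IsProbabilityMeasure P]
    (a : ℕ → ℝ) (ha : ∀ N, 0 < a N)
    (ha1 : Tendsto (fun N : ℕ => a N / (N : ℝ)) atTop (nhds 0))
    (ha2 : Tendsto (fun N : ℕ => Real.sqrt N / a N) atTop (nhds 0))
    (φ : ℝ → ℝ) (hφc : Continuous φ) (hφp : Function.Periodic φ 1)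
    (hφ : ∀ u, φ u ∈ Set.Ioo (0 : ℝ) 1)
    (η : (N : ℕ) → Fin N → Ω → ℝ)
    (hmeas : ∀ N x, Measurable (η N x))
    (hval : ∀ N x ω, η N x ω = 0 ∨ η N x ω = 1)
    (hind : ∀ N, iIndepFun (η N) P)
    (hmarg : ∀ N (x : Fin N), P {ω | η N x ω = 1} = ENNReal.ofReal (φ (x / N)))
    (f : ℝ → ℝ) (hfc : Continuous f) (hfp : Function.Periodic f 1) :
    Tendsto (fun N : ℕ =>
        ((N : ℝ) / (a N) ^ 2) * Real.log (∫ ω,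
          Real.exp ((a N / N) * ∑ x : Fin N, (η N x ω - φ (x / N)) * f (x / N)) ∂P))
      atTop (nhds ((1 / 2) * ∫ u in (0:ℝ)..1, f u ^ 2 * (φ u * (1 - φ u)))) := by
  obtain ⟨M₀, hM₀⟩ :=
    (isCompact_Icc (a := (0:ℝ)) (b := 1)).exists_bound_of_continuousOn hfc.continuousOn
  set M : ℝ := max 1 M₀ with hMdef
  have hM : 1 ≤ M := le_max_left _ _
  have hMpos : (0:ℝ) < M := lt_of_lt_of_le one_pos hM
  have hfb : ∀ u ∈ Set.Icc (0:ℝ) 1, |f u| ≤ M := by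
    intro u hu
    have h := hM₀ u hu
    rw [Real.norm_eq_abs] at h
    exact h.trans (le_max_right _ _)
  set G : ℝ → ℝ := fun u => f u ^ 2 * (φ u * (1 - φ u)) with hGdef
  have hGc : Continuous G := by
    rw [hGdef]; fun_prop
  set S : ℕ → ℝ := fun N => (∑ x : Fin N, G ((x : ℝ) / N)) / N with hSdef
  have hS : Tendsto S atTop (nhds (∫ u in (0:ℝ)..1, G u)) := riemannSum_tendsto G hGc
  -- Step 1: identity for the log-MGF via independence
  have hident : ∀ N : ℕ,
      Real.log (∫ ω,
          Real.exp ((a N / N) * ∑ x : Fin N, (η N x ω - φ (x / N)) * f (x / N)) ∂P)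
      = ∑ x : Fin N, Real.log
          ((1 - φ (x / N)) * Real.exp ((a N / N) * ((0 - φ (x / N)) * f (x / N)))
            + φ (x / N) * Real.exp ((a N / N) * ((1 - φ (x / N)) * f (x / N)))) := by
    intro N
    set t : ℝ := a N / N with htdef
    set Y : Fin N → Ω → ℝ := fun x ω => (η N x ω - φ (x / N)) * f (x / N) with hYdef
    have hYmeas : ∀ x, Measurable (Y x) := by
      intro x
      rw [hYdef]
      exact ((hmeas N x).sub_const _).mul_const _
    have hYind : iIndepFun Y P :=
      (hind N).comp (fun x v => (v - φ (x / N)) * f (x / N))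
        (fun x => (measurable_id.sub_const _).mul_const _)
    have h2 : ∀ x : Fin N,
        Integrable (fun ω => Real.exp (t * Y x ω)) P ∧
        ∫ ω, Real.exp (t * Y x ω) ∂P
          = (1 - φ (x / N)) * Real.exp (t * ((0 - φ (x / N)) * f (x / N)))
            + φ (x / N) * Real.exp (t * ((1 - φ (x / N)) * f (x / N))) := by
      intro x
      exact twoPoint_aux P (η N x) (hmeas N x) (hval N x) (hφ _).1.le (hmarg N x)
        (fun v => Real.exp (t * ((v - φ (x / N)) * f (x / N))))
    have hsum := ProbabilityTheory.iIndepFun.cgf_sum (t := t) hYind hYmeas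
      (s := Finset.univ) (fun x _ => (h2 x).1)
    have e1 : (∫ ω, Real.exp (t * ∑ x : Fin N, (η N x ω - φ (x / N)) * f (x / N)) ∂P)
        = mgf (∑ x ∈ Finset.univ, Y x) P t := by
      rw [ProbabilityTheory.mgf]
      refine integral_congr_ae (Filter.Eventually.of_forall fun ω => ?_)
      simp [Finset.sum_apply, hYdef]
    rw [e1]
    have e2 : Real.log (mgf (∑ x ∈ Finset.univ, Y x) P t)
        = cgf (∑ x ∈ Finset.univ, Y x) P t := rfl
    rw [e2, hsum]
    refine Finset.sum_congr rfl (fun x _ => ?_)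
    have e3 : cgf (Y x) P t = Real.log (∫ ω, Real.exp (t * Y x ω) ∂P) := rfl
    rw [e3, (h2 x).2]
  -- Step 2: eventual error bound
  have hbig : ∀ᶠ N : ℕ in atTop,
      |((N : ℝ) / (a N) ^ 2) * Real.log (∫ ω,
          Real.exp ((a N / N) * ∑ x : Fin N, (η N x ω - φ (x / N)) * f (x / N)) ∂P)
        - (1 / 2) * S N| ≤ 2 * M ^ 3 * (a N / N) := by
    have hev1 : ∀ᶠ N : ℕ in atTop, dist (a N / (N:ℝ)) 0 < 1 / (2 * M ^ 2) :=
      Metric.tendsto_nhds.mp ha1 _ (by positivity)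
    filter_upwards [hev1, eventually_ge_atTop 1] with N hN1 hN2
    have hNpos : (0:ℝ) < N := by exact_mod_cast Nat.lt_of_lt_of_le Nat.zero_lt_one hN2
    have hNne : (N:ℝ) ≠ 0 := ne_of_gt hNpos
    have hane : a N ≠ 0 := (ha N).ne'
    have htnn : 0 ≤ a N / N := le_of_lt (div_pos (ha N) hNpos)
    have ht : |a N / (N:ℝ)| ≤ 1 / (2 * M ^ 2) := by
      rw [Real.dist_eq, sub_zero] at hN1
      exact hN1.le
    have hmem : ∀ x : Fin N, ((x : ℝ) / N) ∈ Set.Icc (0:ℝ) 1 := by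
      intro x
      constructor
      · positivity
      · rw [div_le_one hNpos]
        exact_mod_cast (x.isLt).le
    have hsite : ∀ x : Fin N,
        |Real.log ((1 - φ (x / N)) * Real.exp ((a N / N) * ((0 - φ (x / N)) * f (x / N)))
              + φ (x / N) * Real.exp ((a N / N) * ((1 - φ (x / N)) * f (x / N))))
          - (a N / N) ^ 2 * f (x / N) ^ 2 * (φ (x / N) * (1 - φ (x / N))) / 2|
          ≤ 2 * M ^ 3 * |a N / (N:ℝ)| ^ 3 := by
      intro x
      exact logLam_bound hM (hφ _).1.le (hφ _).2.le (hfb _ (hmem x)) ht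
    have hhalf : (1 / 2) * S N = ((N : ℝ) / (a N) ^ 2) * ∑ x : Fin N,
        ((a N / N) ^ 2 * f (x / N) ^ 2 * (φ (x / N) * (1 - φ (x / N))) / 2) := by
      rw [hSdef, hGdef]
      simp only [Finset.mul_sum, Finset.sum_div]
      refine Finset.sum_congr rfl (fun x _ => ?_)
      field_simp
    rw [hident N, hhalf, ← mul_sub, ← Finset.sum_sub_distrib]
    rw [abs_mul, abs_of_nonneg (by positivity : (0:ℝ) ≤ (N : ℝ) / (a N) ^ 2)]
    calc ((N : ℝ) / (a N) ^ 2) * |∑ x : Fin N,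
          (Real.log ((1 - φ (x / N)) * Real.exp ((a N / N) * ((0 - φ (x / N)) * f (x / N)))
              + φ (x / N) * Real.exp ((a N / N) * ((1 - φ (x / N)) * f (x / N))))
            - (a N / N) ^ 2 * f (x / N) ^ 2 * (φ (x / N) * (1 - φ (x / N))) / 2)|
        ≤ ((N : ℝ) / (a N) ^ 2) * ∑ x : Fin N,
          |Real.log ((1 - φ (x / N)) * Real.exp ((a N / N) * ((0 - φ (x / N)) * f (x / N)))
              + φ (x / N) * Real.exp ((a N / N) * ((1 - φ (x / N)) * f (x / N))))
            - (a N / N) ^ 2 * f (x / N) ^ 2 * (φ (x / N) * (1 - φ (x / N))) / 2| := by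
          apply mul_le_mul_of_nonneg_left (Finset.abs_sum_le_sum_abs _ _) (by positivity)
      _ ≤ ((N : ℝ) / (a N) ^ 2) * ∑ _x : Fin N, (2 * M ^ 3 * |a N / (N:ℝ)| ^ 3) := by
          apply mul_le_mul_of_nonneg_left
            (Finset.sum_le_sum (fun x _ => hsite x)) (by positivity)
      _ = ((N : ℝ) / (a N) ^ 2) * ((N : ℝ) * (2 * M ^ 3 * (a N / N) ^ 3)) := by
          rw [Finset.sum_const, Finset.card_univ, Fintype.card_fin, nsmul_eq_mul,
            abs_of_nonneg htnn]
      _ = 2 * M ^ 3 * (a N / N) := by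
          field_simp
  -- Step 3: pass to the limit
  have hhalfS : Tendsto (fun N => (1 / 2) * S N) atTop
      (nhds ((1 / 2) * ∫ u in (0:ℝ)..1, G u)) := hS.const_mul _
  have hgz : Tendsto (fun N : ℕ => 2 * M ^ 3 * (a N / N)) atTop (nhds 0) := by
    have h := ha1.const_mul (2 * M ^ 3)
    simpa using h
  have herr : Tendsto (fun N : ℕ =>
      ((N : ℝ) / (a N) ^ 2) * Real.log (∫ ω,
          Real.exp ((a N / N) * ∑ x : Fin N, (η N x ω - φ (x / N)) * f (x / N)) ∂P)
        - (1 / 2) * S N) atTop (nhds 0) :=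
    squeeze_zero_norm' (by simpa [Real.norm_eq_abs] using hbig) hgz
  have hfinal := herr.add hhalfS
  rw [zero_add] at hfinal
  refine hfinal.congr (fun N => by ring)
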